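/- Assume ñ > 2. For every rising radial arc (u, a, τ) with slope α > 0, one has u(τ) ≥ (a^{ñ−1}·α/(ñ−2))·(a^{2−ñ} − τ^{2−ñ}) − u(τ)^p·(τ−a)²/(2λ). -/

import Mathlib

open Real Set

/-- `P⁺[u](r)`: the Pucci maximal operator `𝓜⁺_{λ,Λ}` evaluated on the Hessian of the
radial function `v(x) = u(|x|)`, expressed through `u'` and `u''`. -/
noncomputable def Pp (n : ℕ) (lam Lam : ℝ) (u' u'' : ℝ → ℝ) (r : ℝ) : ℝ :=
  Lam * max (u'' r) 0 + lam * min (u'' r) 0 +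
    ((n : ℝ) - 1) * (Lam * max (u' r / r) 0 + lam * min (u' r / r) 0)

/-- `P⁻[u](r)`: the Pucci minimal operator `𝓜⁻_{λ,Λ}` evaluated on the Hessian of the
radial function `v(x) = u(|x|)`. -/
noncomputable def Pm (n : ℕ) (lam Lam : ℝ) (u' u'' : ℝ → ℝ) (r : ℝ) : ℝ :=
  lam * max (u'' r) 0 + Lam * min (u'' r) 0 +
    ((n : ℝ) - 1) * (lam * max (u' r / r) 0 + Lam * min (u' r / r) 0)

/-- `u` satisfies the Pucci differential inequalities at `r`:
`−P⁺[u](r) ≤ |u(r)|^{p−1}u(r) ≤ −P⁻[u](r)`. -/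
def PucciIneq (n : ℕ) (lam Lam p : ℝ) (u u' u'' : ℝ → ℝ) (r : ℝ) : Prop :=
  -Pp n lam Lam u' u'' r ≤ |u r| ^ (p - 1) * u r ∧
    |u r| ^ (p - 1) * u r ≤ -Pm n lam Lam u' u'' r

/-- A rising radial arc with slope `α`: `u ∈ C²([a,τ])`, `u(a) = 0`, `u'(a) = α > 0`,
`u > 0` on `(a,τ]`, `u' > 0` on `[a,τ)`, `u'(τ) = 0`, and `u` satisfies the Pucci
differential inequalities on `(a,τ)`. -/
def RisingArc (n : ℕ) (lam Lam p : ℝ) (u u' u'' : ℝ → ℝ) (a τ α : ℝ) : Prop :=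
  0 < a ∧ a < τ ∧ 0 < α ∧
  (∀ r ∈ Set.Icc a τ, HasDerivAt u (u' r) r) ∧
  (∀ r ∈ Set.Icc a τ, HasDerivAt u' (u'' r) r) ∧
  ContinuousOn u'' (Set.Icc a τ) ∧
  u a = 0 ∧ u' a = α ∧
  (∀ r ∈ Set.Ioc a τ, 0 < u r) ∧
  (∀ r ∈ Set.Ico a τ, 0 < u' r) ∧
  u' τ = 0 ∧
  (∀ r ∈ Set.Ioo a τ, PucciIneq n lam Lam p u u' u'' r)

private lemma monoOn_of_hasDerivAt {f f' : ℝ → ℝ} {a b : ℝ}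
    (hd : ∀ x ∈ Set.Icc a b, HasDerivAt f (f' x) x)
    (h0 : ∀ x ∈ Set.Ioo a b, 0 ≤ f' x) : MonotoneOn f (Set.Icc a b) := by
  apply monotoneOn_of_deriv_nonneg (convex_Icc a b)
  · exact fun x hx => (hd x hx).continuousAt.continuousWithinAt
  · intro x hx
    rw [interior_Icc] at hx
    exact ((hd x (Set.Ioo_subset_Icc_self hx)).differentiableAt).differentiableWithinAt
  · intro x hx
    rw [interior_Icc] at hx
    rw [(hd x (Set.Ioo_subset_Icc_self hx)).deriv]
    exact h0 x hx

private lemma le_of_hasDerivAt_nonneg {f f' : ℝ → ℝ} {a b : ℝ} (hab : a ≤ b)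
    (hd : ∀ x ∈ Set.Icc a b, HasDerivAt f (f' x) x)
    (h0 : ∀ x ∈ Set.Ioo a b, 0 ≤ f' x) : f a ≤ f b :=
  monoOn_of_hasDerivAt hd h0 (Set.left_mem_Icc.2 hab) (Set.right_mem_Icc.2 hab) hab

set_option maxHeartbeats 1000000 in
/-- Estimate (2.8) in the paper: for `ñ₋ > 2` and any rising radial arc,
`u(τ) ≥ (a^{ñ₋−1} α/(ñ₋−2))(a^{2−ñ₋} − τ^{2−ñ₋}) − u(τ)^p (τ−a)²/(2λ)`. -/
theorem rising_arc_peak_second_lower_bound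
    (n : ℕ) (hn : 2 ≤ n) (lam Lam p ntil : ℝ) (hlam : 0 < lam) (hlL : lam ≤ Lam) (hp : 1 < p)
    (hnt : ntil = Lam / lam * ((n : ℝ) - 1) + 1) (hnt2 : 2 < ntil)
    (a τ α : ℝ) (u u' u'' : ℝ → ℝ)
    (harc : RisingArc n lam Lam p u u' u'' a τ α) :
    a ^ (ntil - 1) * α / (ntil - 2) * (a ^ (2 - ntil) - τ ^ (2 - ntil)) -
        u τ ^ p * (τ - a) ^ 2 / (2 * lam) ≤ u τ := by
  obtain ⟨ha, haτ, hα, hd, hd', -, hua, hu'a, hupos, hu'pos, hu'τ, hpucci⟩ := harc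
  have hn1 : (1 : ℝ) ≤ (n : ℝ) - 1 := by
    have : (2 : ℝ) ≤ (n : ℝ) := by exact_mod_cast hn
    linarith
  have huτ : 0 < u τ := hupos τ ⟨haτ, le_rfl⟩
  set M : ℝ := u τ ^ p with hMdef
  have hM : 0 < M := Real.rpow_pos_of_pos huτ p
  set M' : ℝ := M / lam with hM'def
  have hM' : 0 < M' := div_pos hM hlam
  -- u is monotone on [a, τ]
  have humono : MonotoneOn u (Set.Icc a τ) :=
    monoOn_of_hasDerivAt hd fun x hx => (hu'pos x ⟨hx.1.le, hx.2⟩).le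
  -- key pointwise inequality
  have key : ∀ r ∈ Set.Ioo a τ, -M' ≤ u'' r + (ntil - 1) * (u' r / r) := by
    intro r hr
    have hr0 : 0 < r := ha.trans hr.1
    have hu'r : 0 < u' r := hu'pos r ⟨hr.1.le, hr.2⟩
    have hur : 0 < u r := hupos r ⟨hr.1, hr.2.le⟩
    have hq : 0 < u' r / r := div_pos hu'r hr0
    obtain ⟨h1, h2⟩ := hpucci r hr
    have hupp : |u r| ^ (p - 1) * u r = u r ^ p := by
      rw [abs_of_pos hur, ← Real.rpow_add_one hur.ne' (p - 1)]
      norm_num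
    have hu''neg : u'' r < 0 := by
      by_contra hc
      push_neg at hc
      have hPm : Pm n lam Lam u' u'' r
          = lam * u'' r + ((n : ℝ) - 1) * (lam * (u' r / r)) := by
        unfold Pm
        rw [max_eq_left hc, min_eq_right hc, max_eq_left hq.le, min_eq_right hq.le]
        ring
      rw [hupp, hPm] at h2
      have hurp : 0 < u r ^ p := Real.rpow_pos_of_pos hur p
      nlinarith [mul_pos hlam hu'r, mul_pos hlam hq, mul_nonneg hlam.le hc]
    have hPp : Pp n lam Lam u' u'' r
        = lam * u'' r + ((n : ℝ) - 1) * (Lam * (u' r / r)) := by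
      unfold Pp
      rw [max_eq_right hu''neg.le, min_eq_left hu''neg.le, max_eq_left hq.le,
        min_eq_right hq.le]
      ring
    rw [hupp, hPp] at h1
    have hle : u r ^ p ≤ M := by
      apply Real.rpow_le_rpow hur.le _ (by linarith)
      exact humono ⟨hr.1.le, hr.2.le⟩ ⟨haτ.le, le_rfl⟩ hr.2.le
    have h3 : -M ≤ lam * (u'' r + (ntil - 1) * (u' r / r)) := by
      have heq : lam * (u'' r + (ntil - 1) * (u' r / r))
          = lam * u'' r + ((n : ℝ) - 1) * (Lam * (u' r / r)) := by
        rw [hnt]; field_simp; ring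
      rw [heq]; linarith
    rw [hM'def]
    rw [neg_div' , div_le_iff₀ hlam]
    linarith
  -- slope lower bound
  have slope : ∀ r ∈ Set.Ioo a τ,
      a ^ (ntil - 1) * α * r ^ (1 - ntil) - M' * (r - a) ≤ u' r := by
    intro r hr
    have hr0 : 0 < r := ha.trans hr.1
    have hR : 0 < r ^ (ntil - 1) := Real.rpow_pos_of_pos hr0 _
    set ψ : ℝ → ℝ := fun s => s ^ (ntil - 1) * u' s + M' * r ^ (ntil - 1) * s with hψdef
    set ψ' : ℝ → ℝ := fun s =>
      ((ntil - 1) * s ^ (ntil - 1 - 1) * u' s + s ^ (ntil - 1) * u'' s)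
        + M' * r ^ (ntil - 1) with hψ'def
    have hψd : ∀ s ∈ Set.Icc a r, HasDerivAt ψ (ψ' s) s := by
      intro s hs
      have hs0 : 0 < s := ha.trans_le hs.1
      have hsτ : s ∈ Set.Icc a τ := ⟨hs.1, hs.2.trans hr.2.le⟩
      have h1 : HasDerivAt (fun x : ℝ => x ^ (ntil - 1))
          ((ntil - 1) * s ^ (ntil - 1 - 1)) s :=
        Real.hasDerivAt_rpow_const (Or.inl hs0.ne')
      have h2 := (h1.mul (hd' s hsτ)).add
        ((hasDerivAt_id s).const_mul (M' * r ^ (ntil - 1)))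
      refine h2.congr_deriv ?_
      rw [hψ'def]
      ring
    have hψ0 : ∀ s ∈ Set.Ioo a r, 0 ≤ ψ' s := by
      intro s hs
      have hs0 : 0 < s := ha.trans hs.1
      have hsτ : s ∈ Set.Ioo a τ := ⟨hs.1, hs.2.trans hr.2⟩
      have hE := key s hsτ
      have hsp : 0 < s ^ (ntil - 1) := Real.rpow_pos_of_pos hs0 _
      have hb : s ^ (ntil - 1) ≤ r ^ (ntil - 1) :=
        Real.rpow_le_rpow hs0.le hs.2.le (by linarith)
      have hss : s ^ (ntil - 1 - 1) = s ^ (ntil - 1) / s := by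
        rw [Real.rpow_sub hs0, Real.rpow_one]
      have hid : ψ' s = s ^ (ntil - 1) * (u'' s + (ntil - 1) * (u' s / s))
          + M' * r ^ (ntil - 1) := by
        rw [hψ'def]
        simp only
        rw [hss]
        field_simp
        ring
      rw [hid]
      have h4 : s ^ (ntil - 1) * (-M')
          ≤ s ^ (ntil - 1) * (u'' s + (ntil - 1) * (u' s / s)) :=
        mul_le_mul_of_nonneg_left hE hsp.le
      nlinarith
    have hψab : ψ a ≤ ψ r := le_of_hasDerivAt_nonneg hr.1.le hψd hψ0
    rw [hψdef] at hψab
    simp only [hu'a] at hψab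
    have h4 : a ^ (ntil - 1) * α
        ≤ r ^ (ntil - 1) * u' r + M' * r ^ (ntil - 1) * (r - a) := by linarith
    have h5 : a ^ (ntil - 1) * α / r ^ (ntil - 1) ≤ u' r + M' * (r - a) :=
      (div_le_iff₀ hR).mpr (by nlinarith)
    have hinv : r ^ (1 - ntil) = (r ^ (ntil - 1))⁻¹ := by
      rw [show (1 : ℝ) - ntil = -(ntil - 1) by ring, Real.rpow_neg hr0.le]
    rw [hinv, ← div_eq_mul_inv]
    linarith
  -- final integration
  set A : ℝ := a ^ (ntil - 1) * α with hAdef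
  set F : ℝ → ℝ := fun r => u r + A / (ntil - 2) * r ^ (2 - ntil) + M' / 2 * (r - a) ^ 2
    with hFdef
  set F' : ℝ → ℝ := fun r => u' r + A / (ntil - 2) * ((2 - ntil) * r ^ (2 - ntil - 1))
    + M' / 2 * ((2 : ℕ) * (r - a) ^ (2 - 1) * 1) with hF'def
  have hFd : ∀ r ∈ Set.Icc a τ, HasDerivAt F (F' r) r := by
    intro r hrI
    have hr0 : 0 < r := ha.trans_le hrI.1
    have h1 : HasDerivAt (fun x : ℝ => x ^ (2 - ntil))
        ((2 - ntil) * r ^ (2 - ntil - 1)) r :=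
      Real.hasDerivAt_rpow_const (Or.inl hr0.ne')
    have h2 : HasDerivAt (fun x : ℝ => (x - a) ^ 2)
        ((2 : ℕ) * (r - a) ^ (2 - 1) * 1) r :=
      ((hasDerivAt_id r).sub_const a).pow 2
    exact ((hd r hrI).add (h1.const_mul (A / (ntil - 2)))).add (h2.const_mul (M' / 2))
  have hnt2' : ntil - 2 ≠ 0 := by linarith
  have hF0 : ∀ r ∈ Set.Ioo a τ, 0 ≤ F' r := by
    intro r hr
    have hr0 : 0 < r := ha.trans hr.1
    have hs := slope r hr
    have hco : A / (ntil - 2) * ((2 - ntil) * r ^ (2 - ntil - 1))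
        = -(A * r ^ (1 - ntil)) := by
      rw [show (2 : ℝ) - ntil - 1 = 1 - ntil by ring]
      field_simp
      ring
    rw [hF'def]
    simp only
    rw [hco]
    norm_num
    linarith
  have hFab : F a ≤ F τ := le_of_hasDerivAt_nonneg haτ.le hFd hF0
  rw [hFdef] at hFab
  simp only [hua, sub_self] at hFab
  have hexp : A / (ntil - 2) * (a ^ (2 - ntil) - τ ^ (2 - ntil))
      = A / (ntil - 2) * a ^ (2 - ntil) - A / (ntil - 2) * τ ^ (2 - ntil) := by ring
  have hMM : M * (τ - a) ^ 2 / (2 * lam) = M' / 2 * (τ - a) ^ 2 := by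
    rw [hM'def]; ring
  rw [hAdef] at hexp
  rw [hexp, hMM]
  norm_num at hFab
  linarith
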